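/- Let n ≥ 1 and let L be a ℤ-lattice in the space of n×n real matrices. Then there exists a constant C > 0 such that for every real t ≥ 1, the set {A ∈ L : A is positive semidefinite and trace(A) ≤ t} is finite and has cardinality at most C·t^{n²}. -/

import Mathlib

attribute [local instance] Matrix.normedAddCommGroup Matrix.normedSpace

set_option synthInstance.maxHeartbeats 1000000
set_option maxHeartbeats 1000000
open Matrix

/-- Let `n ≥ 1` and let `L` be a `ℤ`-lattice in the space of `n×n` real matrices. Then
there exists a constant `C > 0` such that for every real `t ≥ 1`, the set
`{A ∈ L : A is positive semidefinite and trace(A) ≤ t}` is finite and has cardinality at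
most `C·t^(n²)`. -/
theorem stmt_2 (n : ℕ) (hn : 1 ≤ n) (L : Submodule ℤ (Matrix (Fin n) (Fin n) ℝ))
    [DiscreteTopology L] [@IsZLattice ℝ _ _ _ _ L ‹_›] :
    ∃ C : ℝ, 0 < C ∧ ∀ t : ℝ, 1 ≤ t →
      {A : Matrix (Fin n) (Fin n) ℝ | A ∈ L ∧ A.PosSemidef ∧ A.trace ≤ t}.Finite ∧
      ({A : Matrix (Fin n) (Fin n) ℝ | A ∈ L ∧ A.PosSemidef ∧ A.trace ≤ t}.ncard : ℝ)
        ≤ C * t ^ (n ^ 2) := by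
  classical
  have : @DiscreteTopology L (instTopologicalSpaceSubtype (t :=
    (Matrix.normedAddCommGroup (n := Fin n) (m := Fin n) (α := ℝ)).toPseudoMetricSpace.toUniformSpace.toTopologicalSpace)) := ‹DiscreteTopology L›
  set E := Matrix (Fin n) (Fin n) ℝ
  let b := Module.Free.chooseBasis ℤ L
  let B := b.ofZLatticeBasis ℝ L
  have hcard : Fintype.card (Module.Free.ChooseBasisIndex ℤ L) = n ^ 2 := by
    rw [← Module.finrank_eq_card_chooseBasisIndex, ZLattice.rank ℝ L,
      Module.finrank_matrix, Module.finrank_self, Fintype.card_fin]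
    ring
  let φ : @ContinuousLinearMap ℝ ℝ _ _ (RingHom.id ℝ) E
      (Matrix.normedAddCommGroup (n := Fin n) (m := Fin n) (α := ℝ)).toPseudoMetricSpace.toUniformSpace.toTopologicalSpace
      _ (Module.Free.ChooseBasisIndex ℤ L → ℝ) _ _ _ _ :=
    LinearMap.toContinuousLinearMap B.equivFun.toLinearMap
  set K : ℝ := ‖φ‖ with hKdef
  have hK0 : 0 ≤ K := hKdef ▸ norm_nonneg φ
  have hcoord : ∀ (x : E) i, |B.equivFun x i| ≤ K * ‖x‖ := by
    intro x i
    calc |B.equivFun x i| = ‖φ x i‖ := rfl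
    _ ≤ ‖φ x‖ := norm_le_pi_norm (φ x) i
    _ ≤ K * ‖x‖ := φ.le_opNorm x
  set g : E → (Module.Free.ChooseBasisIndex ℤ L → ℤ) :=
    fun x i => round (B.equivFun x i) with hgdef
  have hint : ∀ x ∈ L, ∀ i, ((g x i : ℤ) : ℝ) = B.equivFun x i := by
    intro x hx i
    have h1 : B.equivFun x i = ((b.repr ⟨x, hx⟩ i : ℤ) : ℝ) := by
      rw [Module.Basis.equivFun_apply]
      exact_mod_cast (b.ofZLatticeBasis_repr_apply ℝ L ⟨x, hx⟩ i)
    rw [hgdef]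
    simp [h1]
  have hinj : Set.InjOn g (L : Set E) := by
    intro x hx y hy hxy
    refine B.equivFun.injective (funext fun i => ?_)
    rw [← hint x hx i, ← hint y hy i, hxy]
  refine ⟨(2 * K + 3) ^ (n ^ 2), by positivity, fun t ht => ?_⟩
  have ht0 : (0:ℝ) ≤ t := le_trans zero_le_one ht
  set S := {A : Matrix (Fin n) (Fin n) ℝ | A ∈ L ∧ A.PosSemidef ∧ A.trace ≤ t} with hSdef
  -- norm bound
  have hnorm : ∀ A ∈ S, ‖A‖ ≤ t := by
    intro A hA
    obtain ⟨hL, hpsd, htr⟩ := hA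
    have hq : ∀ (i j : Fin n) (c : ℝ),
        0 ≤ A i i + c * A i j + c * A j i + c ^ 2 * A j j := by
      intro i j c
      have := hpsd.dotProduct_mulVec_nonneg (Pi.single i 1 + Pi.single j c)
      simp [mulVec_add, mulVec_single, dotProduct_add, add_dotProduct,
        single_dotProduct] at this
      nlinarith [this]
    have hd : ∀ i, 0 ≤ A i i := by
      intro i
      have := hpsd.dotProduct_mulVec_nonneg (Pi.single i 1)
      simpa [mulVec_single, single_dotProduct] using this
    have hdt : ∀ i, A i i ≤ t := by
      intro i
      refine le_trans ?_ htr
      have : A.trace = ∑ j, A j j := rfl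
      rw [this]
      exact Finset.single_le_sum (fun j _ => hd j) (Finset.mem_univ i)
    have hsym : ∀ i j, A j i = A i j := by
      intro i j
      have := hpsd.1.apply i j
      simpa using this
    rw [Matrix.norm_le_iff ht0]
    intro i j
    rw [Real.norm_eq_abs, abs_le]
    have h1 := hq i j 1
    have h2 := hq i j (-1)
    have hs := hsym i j
    constructor <;> nlinarith [hdt i, hdt j, hd i, hd j]
  set M : ℤ := ⌈K * t⌉ with hMdef
  have hM0 : 0 ≤ M := Int.ceil_nonneg (by positivity)
  set Box : Finset (Module.Free.ChooseBasisIndex ℤ L → ℤ) :=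
    Fintype.piFinset fun _ => Finset.Icc (-M) M with hBox
  have himg : g '' S ⊆ ↑Box := by
    rintro _ ⟨A, hA, rfl⟩
    simp only [hBox, Fintype.mem_piFinset, Finset.coe_sort_coe, Finset.mem_coe,
      Finset.mem_Icc]
    intro i
    have habs : |((g A i : ℤ) : ℝ)| ≤ (M : ℝ) := by
      rw [hint A hA.1 i]
      refine le_trans (hcoord A i) (le_trans ?_ (Int.le_ceil _))
      exact mul_le_mul_of_nonneg_left (hnorm A hA) hK0
    have : |g A i| ≤ M := by exact_mod_cast habs
    exact abs_le.mp this
  have hSL : S ⊆ (L : Set E) := fun A hA => hA.1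
  have hinjS : Set.InjOn g S := hinj.mono hSL
  have hfinimg : (g '' S).Finite := Box.finite_toSet.subset himg
  have hfin : S.Finite := Set.Finite.of_finite_image hfinimg hinjS
  refine ⟨hfin, ?_⟩
  have hcount : S.ncard ≤ Box.card := by
    rw [← Set.ncard_image_of_injOn hinjS, ← Set.ncard_coe_finset]
    exact Set.ncard_le_ncard himg Box.finite_toSet
  have hBoxcard : Box.card = (2 * M + 1).toNat ^ (n ^ 2) := by
    rw [hBox, Fintype.card_piFinset]
    simp [Int.card_Icc, hcard]
    ring_nf
  have hMle : ((2 * M + 1).toNat : ℝ) ≤ (2 * K + 3) * t := by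
    have h2M : (((2 * M + 1).toNat : ℤ) : ℝ) = ((2 * M + 1 : ℤ) : ℝ) := by
      exact_mod_cast congrArg (fun z : ℤ => (z : ℝ)) (Int.toNat_of_nonneg (show (0:ℤ) ≤ 2 * M + 1 by linarith))
    rw [show (((2 * M + 1).toNat : ℕ) : ℝ) = (((2 * M + 1).toNat : ℤ) : ℝ) by push_cast; ring, h2M]
    push_cast
    have := Int.ceil_lt_add_one (K * t)
    have h3 : (3:ℝ) ≤ 3 * t := by linarith
    rw [hMdef]
    push_cast
    nlinarith [this]
  calc (S.ncard : ℝ) ≤ (Box.card : ℝ) := by exact_mod_cast hcount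
    _ = ((2 * M + 1).toNat : ℝ) ^ (n ^ 2) := by rw [hBoxcard]; push_cast; ring
    _ ≤ ((2 * K + 3) * t) ^ (n ^ 2) := by
        exact pow_le_pow_left₀ (by positivity) hMle _
    _ = (2 * K + 3) ^ (n ^ 2) * t ^ (n ^ 2) := mul_pow _ _ _
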